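/- Let f(x) = (4/(3π)) ((π - x) cos x + sin x) sin x for 0 < x < π. If X has density f, then E[X] = π/3 and E[X²] = 2π²/9 − 5/6. -/

import Mathlib

open Real MeasureTheory

private lemma sin_sub_mul_cos_nonneg {t : ℝ} (h0 : 0 ≤ t) (hπ : t ≤ π) :
    0 ≤ Real.sin t - t * Real.cos t := by
  rcases le_or_gt (Real.cos t) 0 with hc | hc
  · have hs : 0 ≤ Real.sin t := Real.sin_nonneg_of_nonneg_of_le_pi h0 hπ
    nlinarith
  · rcases eq_or_lt_of_le h0 with rfl | h0'
    · simp
    · have ht2 : t < π / 2 := by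
        by_contra h
        push_neg at h
        have := Real.cos_nonpos_of_pi_div_two_le_of_le h (by linarith [Real.pi_pos])
        linarith
      have := Real.lt_tan h0' ht2
      rw [Real.tan_eq_sin_div_cos] at this
      have h2 := (lt_div_iff₀ hc).mp this
      linarith

private lemma angle_density_nonneg {x : ℝ} (hx : x ∈ Set.Ioo 0 π) :
    0 ≤ ((π - x) * Real.cos x + Real.sin x) * Real.sin x := by
  obtain ⟨h0, hπ⟩ := hx
  have hs : 0 ≤ Real.sin x := Real.sin_nonneg_of_nonneg_of_le_pi h0.le hπ.le
  have key : 0 ≤ (π - x) * Real.cos x + Real.sin x := by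
    have h1 : 0 ≤ Real.sin (π - x) - (π - x) * Real.cos (π - x) :=
      sin_sub_mul_cos_nonneg (by linarith) (by linarith)
    rw [Real.sin_pi_sub, Real.cos_pi_sub] at h1
    linarith
  positivity

private lemma int_moment1 :
    ∫ x in (0:ℝ)..π, x * (((π - x) * Real.cos x + Real.sin x) * Real.sin x) = π ^ 2 / 4 := by
  have key : ∀ x ∈ Set.uIcc (0:ℝ) π, HasDerivAt
      (fun y : ℝ => π/8 * Real.sin (2*y) + (-(π/4)) * (y * Real.cos (2*y))
        + (1/4 : ℝ) * (y^2 * Real.cos (2*y)) + (-(1/2) : ℝ) * (y * Real.sin (2*y))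
        + (-(1/4) : ℝ) * Real.cos (2*y) + (1/4 : ℝ) * y^2)
      (x * (((π - x) * Real.cos x + Real.sin x) * Real.sin x)) x := by
    intro x _
    have h2x : HasDerivAt (fun y : ℝ => 2*y) 2 x := by
      simpa using (hasDerivAt_id x).const_mul 2
    have hs : HasDerivAt (fun y : ℝ => Real.sin (2*y)) (Real.cos (2*x) * 2) x :=
      (Real.hasDerivAt_sin _).comp x h2x
    have hc : HasDerivAt (fun y : ℝ => Real.cos (2*y)) (-Real.sin (2*x) * 2) x :=
      (Real.hasDerivAt_cos _).comp x h2x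
    have h1 := hs.const_mul (π/8 : ℝ)
    have h2 := ((hasDerivAt_id x).mul hc).const_mul (-(π/4) : ℝ)
    have h3 := ((hasDerivAt_pow 2 x).mul hc).const_mul ((1/4 : ℝ))
    have h4 := ((hasDerivAt_id x).mul hs).const_mul ((-(1/2) : ℝ))
    have h5 := hc.const_mul ((-(1/4) : ℝ))
    have h6 := (hasDerivAt_pow 2 x).const_mul ((1/4 : ℝ))
    have H := ((((h1.add h2).add h3).add h4).add h5).add h6
    convert H using 1
    all_goals try rfl
    simp only [id_eq]
    rw [Real.sin_two_mul, Real.cos_two_mul]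
    push_cast
    linear_combination (x : ℝ) * Real.sin_sq_add_cos_sq x
  rw [intervalIntegral.integral_eq_sub_of_hasDerivAt key
    (by apply Continuous.intervalIntegrable; continuity)]
  simp [Real.sin_two_pi, Real.cos_two_pi]
  ring

private lemma int_moment2 :
    ∫ x in (0:ℝ)..π, x ^ 2 * (((π - x) * Real.cos x + Real.sin x) * Real.sin x)
      = π ^ 3 / 6 - 5 * π / 8 := by
  have key : ∀ x ∈ Set.uIcc (0:ℝ) π, HasDerivAt
      (fun y : ℝ => (π/4) * (y * Real.sin (2*y)) + (-(5/8) : ℝ) * (y^2 * Real.sin (2*y))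
        + (5/16 : ℝ) * Real.sin (2*y) + (-(π/4)) * (y^2 * Real.cos (2*y))
        + (1/4 : ℝ) * (y^3 * Real.cos (2*y)) + (-(5/8) : ℝ) * (y * Real.cos (2*y))
        + (π/8) * Real.cos (2*y) + (1/6 : ℝ) * y^3)
      (x ^ 2 * (((π - x) * Real.cos x + Real.sin x) * Real.sin x)) x := by
    intro x _
    have h2x : HasDerivAt (fun y : ℝ => 2*y) 2 x := by
      simpa using (hasDerivAt_id x).const_mul 2
    have hs : HasDerivAt (fun y : ℝ => Real.sin (2*y)) (Real.cos (2*x) * 2) x :=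
      (Real.hasDerivAt_sin _).comp x h2x
    have hc : HasDerivAt (fun y : ℝ => Real.cos (2*y)) (-Real.sin (2*x) * 2) x :=
      (Real.hasDerivAt_cos _).comp x h2x
    have h1 := ((hasDerivAt_id x).mul hs).const_mul (π/4 : ℝ)
    have h2 := ((hasDerivAt_pow 2 x).mul hs).const_mul ((-(5/8) : ℝ))
    have h3 := hs.const_mul ((5/16 : ℝ))
    have h4 := ((hasDerivAt_pow 2 x).mul hc).const_mul ((-(π/4)) : ℝ)
    have h5 := ((hasDerivAt_pow 3 x).mul hc).const_mul ((1/4 : ℝ))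
    have h6 := ((hasDerivAt_id x).mul hc).const_mul ((-(5/8) : ℝ))
    have h7 := hc.const_mul ((π/8) : ℝ)
    have h8 := (hasDerivAt_pow 3 x).const_mul ((1/6 : ℝ))
    have H := ((((((h1.add h2).add h3).add h4).add h5).add h6).add h7).add h8
    convert H using 1
    all_goals try rfl
    simp only [id_eq]
    rw [Real.sin_two_mul, Real.cos_two_mul]
    push_cast
    linear_combination (x^2 : ℝ) * Real.sin_sq_add_cos_sq x
  rw [intervalIntegral.integral_eq_sub_of_hasDerivAt key
    (by apply Continuous.intervalIntegrable; continuity)]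
  simp [Real.sin_two_pi, Real.cos_two_pi]
  ring

/-- If `X` has density `f(x) = (4/(3π))((π - x)cos x + sin x) sin x` on `(0, π)`,
then `E[X] = π/3` and `E[X²] = 2π²/9 - 5/6`. -/
theorem poisson_delaunay_angle_moments
    (f : ℝ → ℝ)
    (hf : ∀ x, f x = (4 / (3 * π)) * ((π - x) * Real.cos x + Real.sin x) * Real.sin x)
    (μ : Measure ℝ)
    (hμ : μ = volume.withDensity fun x =>
        ENNReal.ofReal (if x ∈ Set.Ioo 0 π then f x else 0)) :
    (∫ x, x ∂μ) = π / 3 ∧ (∫ x, x ^ 2 ∂μ) = 2 * π ^ 2 / 9 - 5 / 6 := by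
  have hπ : (0:ℝ) < π := Real.pi_pos
  have hfc : Continuous f := by
    have : f = fun x => (4 / (3 * π)) * ((π - x) * Real.cos x + Real.sin x) * Real.sin x :=
      funext hf
    rw [this]; continuity
  set d : ℝ → ℝ := fun x => if x ∈ Set.Ioo 0 π then f x else 0 with hd
  have hdm : Measurable fun x => (d x).toNNReal :=
    (hfc.measurable.ite measurableSet_Ioo measurable_const).real_toNNReal
  have hdnn : ∀ x, 0 ≤ d x := by
    intro x
    simp only [hd]
    split
    · rename_i hx
      rw [hf x]
      have h2 : (0:ℝ) ≤ 4 / (3 * π) := by positivity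
      rw [mul_assoc]
      exact mul_nonneg h2 (angle_density_nonneg hx)
    · exact le_refl 0
  -- general reduction for any continuous g
  have reduce : ∀ g : ℝ → ℝ, (∫ x, g x ∂μ) = ∫ x in (0:ℝ)..π, f x * g x := by
    intro g
    rw [hμ]
    calc ∫ x, g x ∂(volume.withDensity fun x => ENNReal.ofReal (d x))
        = ∫ x, (d x).toNNReal • g x := integral_withDensity_eq_integral_smul hdm g
      _ = ∫ x, d x * g x := by
          congr 1
          funext x
          rw [NNReal.smul_def, Real.coe_toNNReal _ (hdnn x)]
          rfl
      _ = ∫ x, Set.indicator (Set.Ioo 0 π) (fun x => f x * g x) x := by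
          congr 1
          funext x
          simp only [hd, Set.indicator, ite_mul, zero_mul]
      _ = ∫ x in Set.Ioo 0 π, f x * g x := integral_indicator measurableSet_Ioo
      _ = ∫ x in Set.Ioc 0 π, f x * g x := (integral_Ioc_eq_integral_Ioo).symm
      _ = ∫ x in (0:ℝ)..π, f x * g x := (intervalIntegral.integral_of_le hπ.le).symm
  have hpi_ne : (3 * π) ≠ 0 := by positivity
  constructor
  · rw [show (∫ (x : ℝ), x ∂μ) = ∫ x, id x ∂μ from rfl, reduce id]
    have : ∀ x : ℝ, f x * id x
        = (4 / (3 * π)) * (x * (((π - x) * Real.cos x + Real.sin x) * Real.sin x)) := by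
      intro x; rw [hf x]; simp [id]; ring
    rw [intervalIntegral.integral_congr (fun x _ => this x),
      intervalIntegral.integral_const_mul, int_moment1]
    field_simp
  · rw [reduce (fun x => x ^ 2)]
    have : ∀ x : ℝ, f x * x ^ 2
        = (4 / (3 * π)) * (x ^ 2 * (((π - x) * Real.cos x + Real.sin x) * Real.sin x)) := by
      intro x; rw [hf x]; ring
    rw [intervalIntegral.integral_congr (fun x _ => this x),
      intervalIntegral.integral_const_mul, int_moment2]
    field_simp
    ring
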